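/- arXiv:2309.00360 — 8 statements merged into one kernel-verified Lean document; each statement's English description precedes it below -/
import Mathlib

section
/- In a linear space, the parallelity relation, restricted to the set of all affine lines, is an equivalence relation; in particular, two distinct parallels of an affine line are disjoint from each other. -/
/-- A linear space: a point set `M` together with a collection of lines (subsets of `M`)
such that every line has at least 3 points, any two distinct points lie on exactly one
common line, and every point lies on at least 3 lines. -/
structure LinearSpace (M : Type*) where
  lines : Set (Set M)
  exists_three_points : ∀ L ∈ lines, ∃ a b c : M,
    a ∈ L ∧ b ∈ L ∧ c ∈ L ∧ a ≠ b ∧ a ≠ c ∧ b ≠ c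
  join_unique : ∀ p q : M, p ≠ q → ∃! L, L ∈ lines ∧ p ∈ L ∧ q ∈ L
  exists_three_lines : ∀ p : M, ∃ L₁ L₂ L₃, L₁ ∈ lines ∧ L₂ ∈ lines ∧ L₃ ∈ lines ∧
    p ∈ L₁ ∧ p ∈ L₂ ∧ p ∈ L₃ ∧ L₁ ≠ L₂ ∧ L₁ ≠ L₃ ∧ L₂ ≠ L₃

namespace LinearSpace

variable {M : Type*}

/-- Two lines are parallel if they are equal or disjoint. -/
def Parallel (L K : Set M) : Prop := L = K ∨ L ∩ K = ∅

/-- A line `L` is affine if for every point `p ∉ L` there is exactly one line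
through `p` disjoint from `L`. -/
def IsAffine (S : LinearSpace M) (L : Set M) : Prop :=
  L ∈ S.lines ∧ ∀ p ∉ L, ∃! K, K ∈ S.lines ∧ p ∈ K ∧ K ∩ L = ∅

/-- A line is projective if it meets every other line. -/
def IsProjective (S : LinearSpace M) (L : Set M) : Prop :=
  L ∈ S.lines ∧ ∀ K ∈ S.lines, K ≠ L → (L ∩ K).Nonempty

/-- An affine line is biaffine if every line parallel to it is also affine. -/
def IsBiaffine (S : LinearSpace M) (L : Set M) : Prop :=
  S.IsAffine L ∧ ∀ K ∈ S.lines, Parallel K L → S.IsAffine K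

end LinearSpace

open LinearSpace

/-- The parallelity relation, restricted to the set of all affine lines, is an
equivalence relation; in particular, two distinct parallels of an affine line are
disjoint from each other. -/
theorem parallel_equivalence_on_affine_lines {M : Type*} (S : LinearSpace M) :
    Equivalence (fun A B : {L : Set M // S.IsAffine L} => Parallel A.1 B.1) ∧
    (∀ A K K' : Set M, S.IsAffine A → K ∈ S.lines → K' ∈ S.lines →
      Parallel K A → Parallel K' A → K ≠ K' → K ∩ K' = ∅) := by
  have key : ∀ A K K' : Set M, S.IsAffine A → K ∈ S.lines → K' ∈ S.lines →
      Parallel K A → Parallel K' A → K ≠ K' → K ∩ K' = ∅ := by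
    intro A K K' hA hK hK' hKA hK'A hne
    by_contra h
    obtain ⟨p, hpK, hpK'⟩ := Set.nonempty_iff_ne_empty.2 h
    rcases hKA with rfl | hKA
    · rcases hK'A with h1 | h1
      · exact hne h1.symm
      · exact Set.notMem_empty p (h1 ▸ Set.mem_inter hpK' hpK)
    · rcases hK'A with rfl | hK'A
      · exact Set.notMem_empty p (hKA ▸ Set.mem_inter hpK hpK')
      · have hpA : p ∉ A := fun hpA =>
          Set.notMem_empty p (hKA ▸ Set.mem_inter hpK hpA)
        obtain ⟨L, -, hu⟩ := hA.2 p hpA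
        exact hne ((hu K ⟨hK, hpK, hKA⟩).trans (hu K' ⟨hK', hpK', hK'A⟩).symm)
  refine ⟨⟨fun A => Or.inl rfl, ?_, ?_⟩, key⟩
  · rintro A B (h | h)
    · exact Or.inl h.symm
    · exact Or.inr (by rw [Set.inter_comm]; exact h)
  · rintro A B C hAB hBC
    rcases hAB with h | h
    · exact h ▸ hBC
    · rcases hBC with h' | h'
      · exact Or.inr (h' ▸ h)
      · by_cases hAC : A.1 = C.1
        · exact Or.inl hAC
        · exact Or.inr (key B.1 A.1 C.1 B.2 A.2.1 C.2.1 (Or.inr h)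
            (Or.inr (by rw [Set.inter_comm]; exact h')) hAC)
end

section
/- Let A and B be two biaffine lines of a linear space that intersect each other. Then every line parallel to A intersects every line parallel to B. -/
open LinearSpace

/-- If `A` and `B` are two intersecting biaffine lines, then every line parallel to `A`
intersects every line parallel to `B`. -/
theorem parallels_of_intersecting_biaffine_lines_meet {M : Type*} (S : LinearSpace M)
    (A B : Set M) (hA : S.IsBiaffine A) (hB : S.IsBiaffine B) (hAB : A ≠ B)
    (hmeet : (A ∩ B).Nonempty) :
    ∀ A' ∈ S.lines, ∀ B' ∈ S.lines,
      Parallel A' A → Parallel B' B → (A' ∩ B').Nonempty := by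
  obtain ⟨p, hpA, hpB⟩ := hmeet
  intro A' hA'mem B' hB'mem hPA hPB
  by_contra hne
  rw [Set.not_nonempty_iff_eq_empty] at hne
  have hA'aff : S.IsAffine A' := hA.2 A' hA'mem hPA
  have hB'aff : S.IsAffine B' := hB.2 B' hB'mem hPB
  have hAmem : A ∈ S.lines := hA.1.1
  have hBmem : B ∈ S.lines := hB.1.1
  -- Step 1: A' meets B at some point q
  have hq : ∃ q, q ∈ A' ∧ q ∈ B := by
    rcases hPA with h | h
    · exact ⟨p, h ▸ hpA, hpB⟩
    · by_contra hqn
      push_neg at hqn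
      have hpA' : p ∉ A' := fun hp =>
        Set.eq_empty_iff_forall_notMem.mp h p ⟨hp, hpA⟩
      have hu := hA'aff.2 p hpA'
      have h1 : A ∈ S.lines ∧ p ∈ A ∧ A ∩ A' = ∅ :=
        ⟨hAmem, hpA, by rw [Set.inter_comm]; exact h⟩
      have h2 : B ∈ S.lines ∧ p ∈ B ∧ B ∩ A' = ∅ :=
        ⟨hBmem, hpB, Set.eq_empty_iff_forall_notMem.mpr
          fun x hx => hqn x hx.2 hx.1⟩
      exact hAB (hu.unique h1 h2)
  obtain ⟨q, hqA', hqB⟩ := hq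
  rcases hPB with h | hB'B
  · exact Set.eq_empty_iff_forall_notMem.mp hne q ⟨hqA', h ▸ hqB⟩
  -- Now B' ∩ B = ∅
  have hpB' : p ∉ B' := fun hp =>
    Set.eq_empty_iff_forall_notMem.mp hB'B p ⟨hp, hpB⟩
  -- Step 2: B' meets A at some point r
  have hr : ∃ r, r ∈ A ∧ r ∈ B' := by
    by_contra hrn
    push_neg at hrn
    have hu := hB'aff.2 p hpB'
    have h1 : B ∈ S.lines ∧ p ∈ B ∧ B ∩ B' = ∅ :=
      ⟨hBmem, hpB, by rw [Set.inter_comm]; exact hB'B⟩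
    have h2 : A ∈ S.lines ∧ p ∈ A ∧ A ∩ B' = ∅ :=
      ⟨hAmem, hpA, Set.eq_empty_iff_forall_notMem.mpr
        fun x hx => hrn x hx.1 hx.2⟩
    exact hAB (hu.unique h2 h1)
  obtain ⟨r, hrA, hrB'⟩ := hr
  rcases hPA with h | hA'A
  · exact Set.eq_empty_iff_forall_notMem.mp hne r ⟨h ▸ hrA, hrB'⟩
  -- Now A' ∩ A = ∅
  have hrA' : r ∉ A' := fun hr' =>
    Set.eq_empty_iff_forall_notMem.mp hA'A r ⟨hr', hrA⟩
  have hu := hA'aff.2 r hrA'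
  have h1 : A ∈ S.lines ∧ r ∈ A ∧ A ∩ A' = ∅ :=
    ⟨hAmem, hrA, by rw [Set.inter_comm]; exact hA'A⟩
  have h2 : B' ∈ S.lines ∧ r ∈ B' ∧ B' ∩ A' = ∅ :=
    ⟨hB'mem, hrB', by rw [Set.inter_comm]; exact hne⟩
  have : A = B' := hu.unique h1 h2
  exact hpB' (this ▸ hpA)
end

section
/- Let A and B be two intersecting biaffine lines of a linear space (M, 𝓛). For a point p and a biaffine line L, let P(L, p) denote the unique line through p parallel to L (with P(L, p) = L if p ∈ L). Then the map A × B → M sending a pair (a, b) to the unique intersection point of P(B, a) and P(A, b) is a bijection. -/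
namespace LinearSpace

variable {M : Type*}

/-- Two distinct points lie on at most one line. -/
lemma line_eq_of_two (S : LinearSpace M) {L K : Set M} {p q : M}
    (hL : L ∈ S.lines) (hK : K ∈ S.lines) (hpq : p ≠ q)
    (h1 : p ∈ L) (h2 : q ∈ L) (h3 : p ∈ K) (h4 : q ∈ K) : L = K := by
  obtain ⟨U, _, hU⟩ := S.join_unique p q hpq
  exact (hU L ⟨hL, h1, h2⟩).trans (hU K ⟨hK, h3, h4⟩).symm

/-- Through a point there is at most one line parallel to a given affine line. -/
lemma par_unique (S : LinearSpace M) {B K₁ K₂ : Set M} {p : M} (hB : S.IsAffine B)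
    (h1 : K₁ ∈ S.lines) (h2 : K₂ ∈ S.lines) (hp1 : p ∈ K₁) (hp2 : p ∈ K₂)
    (hpar1 : Parallel K₁ B) (hpar2 : Parallel K₂ B) : K₁ = K₂ := by
  by_cases hpB : p ∈ B
  · have e1 : K₁ = B := hpar1.resolve_right
      (fun h => absurd (Set.mem_inter hp1 hpB) (by simp [h]))
    have e2 : K₂ = B := hpar2.resolve_right
      (fun h => absurd (Set.mem_inter hp2 hpB) (by simp [h]))
    rw [e1, e2]
  · have d1 : K₁ ∩ B = ∅ := hpar1.resolve_left (fun h => hpB (h ▸ hp1))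
    have d2 : K₂ ∩ B = ∅ := hpar2.resolve_left (fun h => hpB (h ▸ hp2))
    obtain ⟨U, _, hU⟩ := hB.2 p hpB
    exact (hU K₁ ⟨h1, hp1, d1⟩).trans (hU K₂ ⟨h2, hp2, d2⟩).symm

end LinearSpace

open LinearSpace

/-- For two intersecting biaffine lines `A` and `B`, the map `A × B → M` sending
`(a, b)` to the intersection point of `P (B, a)` and `P (A, b)` is a bijection.
Here `P` is the map assigning to an affine line `L` and a point `p` the unique
line through `p` parallel to `L`. -/
theorem biaffine_coordinates_bijective {M : Type*} (S : LinearSpace M)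
    (A B : Set M) (hA : S.IsBiaffine A) (hB : S.IsBiaffine B) (hAB : A ≠ B)
    (hmeet : (A ∩ B).Nonempty)
    (P : Set M → M → Set M)
    (hP : ∀ L : Set M, ∀ p : M, S.IsAffine L →
      P L p ∈ S.lines ∧ p ∈ P L p ∧ Parallel (P L p) L)
    (f : A × B → M)
    (hf : ∀ ab : A × B, f ab ∈ P B (ab.1 : M) ∧ f ab ∈ P A (ab.2 : M)) :
    Function.Bijective f := by
  obtain ⟨o, hoA, hoB⟩ := hmeet
  have hAl : A ∈ S.lines := hA.1.1
  have hBl : B ∈ S.lines := hB.1.1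
  -- no line parallel to B equals A, and vice versa
  have hnotparAB : ¬ Parallel A B := by
    rintro (h | h)
    · exact hAB h
    · exact absurd (Set.mem_inter hoA hoB) (by simp [h])
  have hnotparBA : ¬ Parallel B A := by
    rintro (h | h)
    · exact hAB h.symm
    · exact absurd (Set.mem_inter hoB hoA) (by simp [h])
  -- any line parallel to B meets A, and symmetrically
  have meets : ∀ (C D : Set M), S.IsBiaffine C → S.IsBiaffine D → C ∈ S.lines →
      D ∈ S.lines → C ≠ D → o ∈ C → o ∈ D → ∀ K ∈ S.lines, Parallel K D →
      (K ∩ C).Nonempty := by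
    intro C D hC hD hCl hDl hCD hoC hoD K hKl hKD
    by_contra hempty
    have hKC : K ∩ C = ∅ := Set.not_nonempty_iff_eq_empty.mp hempty
    have hKB : K ∩ D = ∅ := by
      rcases hKD with h | h
      · exact absurd (Set.mem_inter (h.symm ▸ hoD) hoC) (by simp [hKC])
      · exact h
    have hoK : o ∉ K := fun h => absurd (Set.mem_inter h hoC) (by simp [hKC])
    have hKaff : S.IsAffine K := hD.2 K hKl hKD
    obtain ⟨U, _, hU⟩ := hKaff.2 o hoK
    have eC : C = U := hU C ⟨hCl, hoC, by rw [Set.inter_comm]; exact hKC⟩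
    have eD : D = U := hU D ⟨hDl, hoD, by rw [Set.inter_comm]; exact hKB⟩
    exact hCD (eC.trans eD.symm)
  constructor
  · -- injective
    rintro ⟨a, b⟩ ⟨a', b'⟩ hfe
    obtain ⟨h1, h2⟩ := hf (a, b)
    obtain ⟨h1', h2'⟩ := hf (a', b')
    obtain ⟨hBa_l, hBa_m, hBa_p⟩ := hP B a hB.1
    obtain ⟨hBa'_l, hBa'_m, hBa'_p⟩ := hP B a' hB.1
    obtain ⟨hAb_l, hAb_m, hAb_p⟩ := hP A b hA.1
    obtain ⟨hAb'_l, hAb'_m, hAb'_p⟩ := hP A b' hA.1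
    rw [hfe] at h1 h2
    -- the two lines parallel to B through f(a',b') coincide
    have eB : P B (a : M) = P B (a' : M) :=
      S.par_unique hB.1 hBa_l hBa'_l h1 h1' hBa_p hBa'_p
    have eA : P A (b : M) = P A (b' : M) :=
      S.par_unique hA.1 hAb_l hAb'_l h2 h2' hAb_p hAb'_p
    -- P B a ≠ A
    have hPBA : P B (a : M) ≠ A := fun h => hnotparAB (h ▸ hBa_p)
    have hPAB : P A (b : M) ≠ B := fun h => hnotparBA (h ▸ hAb_p)
    have haa : (a : M) = (a' : M) := by
      by_contra hne
      exact hPBA (S.line_eq_of_two hBa_l hAl hne hBa_m (eB ▸ hBa'_m) a.2 a'.2)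
    have hbb : (b : M) = (b' : M) := by
      by_contra hne
      exact hPAB (S.line_eq_of_two hAb_l hBl hne hAb_m (eA ▸ hAb'_m) b.2 b'.2)
    exact Prod.ext (Subtype.ext haa) (Subtype.ext hbb)
  · -- surjective
    intro m
    obtain ⟨hBm_l, hBm_m, hBm_p⟩ := hP B m hB.1
    obtain ⟨hAm_l, hAm_m, hAm_p⟩ := hP A m hA.1
    obtain ⟨a, haK, haA⟩ := meets A B hA hB hAl hBl hAB hoA hoB (P B m) hBm_l hBm_p
    obtain ⟨b, hbK, hbB⟩ := meets B A hB hA hBl hAl (Ne.symm hAB) hoB hoA (P A m) hAm_l hAm_p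
    obtain ⟨hBa_l, hBa_m, hBa_p⟩ := hP B a hB.1
    obtain ⟨hAb_l, hAb_m, hAb_p⟩ := hP A b hA.1
    -- P B a = P B m, both through a parallel to B
    have eB : P B a = P B m := S.par_unique hB.1 hBa_l hBm_l hBa_m haK hBa_p hBm_p
    have eA : P A b = P A m := S.par_unique hA.1 hAb_l hAm_l hAb_m hbK hAb_p hAm_p
    refine ⟨(⟨a, haA⟩, ⟨b, hbB⟩), ?_⟩
    obtain ⟨h1, h2⟩ := hf (⟨a, haA⟩, ⟨b, hbB⟩)
    have h1 : f (⟨a, haA⟩, ⟨b, hbB⟩) ∈ P B a := h1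
    have h2 : f (⟨a, haA⟩, ⟨b, hbB⟩) ∈ P A b := h2
    -- the two lines P B a and P A b are distinct
    have hne : P B a ≠ P A b := by
      intro h
      have haPA : a ∈ P A b := h ▸ hBa_m
      have hPAbA : P A b = A := by
        rcases hAb_p with h' | h'
        · exact h'
        · exact absurd (Set.mem_inter haPA haA) (by simp [h'])
      exact hnotparAB (hPAbA ▸ h ▸ hBa_p)
    -- m ∈ P B a and m ∈ P A b
    have hmBa : m ∈ P B a := eB ▸ hBm_m
    have hmAb : m ∈ P A b := eA ▸ hAm_m
    by_contra hfm
    exact hne (S.line_eq_of_two hBa_l hAb_l hfm h1 hmBa h2 hmAb)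
end

section
/- Let A and B be two intersecting biaffine lines of a linear space, and let L be a projective line. Then the map L → B sending a point p ∈ L to the unique intersection point of P(A, p) with B is a bijection, where P(A, p) denotes the unique line through p parallel to A. -/
open LinearSpace

/-- For two intersecting biaffine lines `A`, `B` and a projective line `L`, the map
`L → B` sending `p ∈ L` to the unique intersection point of `P (A, p)` with `B`
is a bijection. Here `P` is the map assigning to an affine line and a point the
unique parallel line through that point. -/
theorem projective_to_biaffine_bijective {M : Type*} (S : LinearSpace M)
    (A B L : Set M) (hA : S.IsBiaffine A) (hB : S.IsBiaffine B) (hAB : A ≠ B)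
    (hmeet : (A ∩ B).Nonempty) (hL : S.IsProjective L)
    (P : Set M → M → Set M)
    (hP : ∀ L' : Set M, ∀ p : M, S.IsAffine L' →
      P L' p ∈ S.lines ∧ p ∈ P L' p ∧ Parallel (P L' p) L')
    (f : L → B)
    (hf : ∀ p : L, (f p : M) ∈ P A (p : M)) :
    Function.Bijective f := by
  have hAaff : S.IsAffine A := hA.1
  have lineA : A ∈ S.lines := hAaff.1
  have lineB : B ∈ S.lines := hB.1.1
  have lineL : L ∈ S.lines := hL.1
  -- distinct lines share at most one point
  have unique_pt : ∀ K₁ K₂ : Set M, K₁ ∈ S.lines → K₂ ∈ S.lines → K₁ ≠ K₂ →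
      ∀ p q : M, p ∈ K₁ → p ∈ K₂ → q ∈ K₁ → q ∈ K₂ → p = q := by
    intro K₁ K₂ h₁ h₂ hne p q hp1 hp2 hq1 hq2
    by_contra hpq
    obtain ⟨J, _, hJu⟩ := S.join_unique p q hpq
    exact hne ((hJu K₁ ⟨h₁, hp1, hq1⟩).trans (hJu K₂ ⟨h₂, hp2, hq2⟩).symm)
  -- uniqueness of parallels to A through a point
  have par_unique : ∀ K₁ K₂ : Set M, K₁ ∈ S.lines → K₂ ∈ S.lines →
      Parallel K₁ A → Parallel K₂ A → ∀ p : M, p ∈ K₁ → p ∈ K₂ → K₁ = K₂ := by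
    intro K₁ K₂ h₁ h₂ hp₁ hp₂ p hpK₁ hpK₂
    rcases hp₁ with h₁A | h₁A
    · rcases hp₂ with h₂A | h₂A
      · rw [h₁A, h₂A]
      · exact absurd (Set.mem_inter hpK₂ (h₁A ▸ hpK₁))
          (by rw [h₂A]; exact Set.notMem_empty p)
    · rcases hp₂ with h₂A | h₂A
      · exact absurd (Set.mem_inter hpK₁ (h₂A ▸ hpK₂))
          (by rw [h₁A]; exact Set.notMem_empty p)
      · have hpA : p ∉ A := fun hpA =>
          Set.notMem_empty p (h₁A ▸ Set.mem_inter hpK₁ hpA)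
        obtain ⟨J, _, hJu⟩ := hAaff.2 p hpA
        exact (hJu K₁ ⟨h₁, hpK₁, h₁A⟩).trans (hJu K₂ ⟨h₂, hpK₂, h₂A⟩).symm
  -- a point of B outside A
  obtain ⟨x, hxA, hxB⟩ := id hmeet
  have ex_b : ∃ b ∈ B, b ∉ A := by
    obtain ⟨a, b, c, haB, hbB, hcB, hab, hac, hbc⟩ := S.exists_three_points B lineB
    have key : ∀ y, y ∈ B → y ≠ x → y ∉ A := fun y hyB hyx hyA =>
      hyx (unique_pt A B lineA lineB hAB y x hyA hyB hxA hxB)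
    by_cases hax : a = x
    · by_cases hbx : b = x
      · exact absurd (hax.trans hbx.symm) hab
      · exact ⟨b, hbB, key b hbB hbx⟩
    · exact ⟨a, haB, key a haB hax⟩
  -- A ≠ L
  have hANeL : A ≠ L := by
    intro h
    obtain ⟨b, _, hbA⟩ := ex_b
    obtain ⟨K, ⟨hKl, _, hKA⟩, _⟩ := hAaff.2 b hbA
    have hKL : K ≠ L := by
      intro hKL
      obtain ⟨a, _, _, haA, _⟩ := S.exists_three_points A lineA
      exact Set.notMem_empty a (hKA ▸ Set.mem_inter (hKL ▸ h ▸ haA) haA)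
    obtain ⟨y, hyL, hyK⟩ := hL.2 K hKl hKL
    exact Set.notMem_empty y (hKA ▸ Set.mem_inter hyK (h ▸ hyL))
  constructor
  · -- injective
    intro p q h
    obtain ⟨hPp_line, hPp_mem, hPp_par⟩ := hP A (p : M) hAaff
    obtain ⟨hPq_line, hPq_mem, hPq_par⟩ := hP A (q : M) hAaff
    have hfp : (f p : M) ∈ P A (p : M) := hf p
    have hfq : (f p : M) ∈ P A (q : M) := by rw [h]; exact hf q
    have hPP : P A (p : M) = P A (q : M) :=
      par_unique _ _ hPp_line hPq_line hPp_par hPq_par (f p : M) hfp hfq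
    by_cases hPL : P A (p : M) = L
    · -- L would be parallel to A, impossible
      exfalso
      rcases hPp_par with hpa | hpa
      · exact hANeL (hpa ▸ hPL)
      · obtain ⟨y, hyL, hyA⟩ := hL.2 A lineA hANeL
        exact Set.notMem_empty y (hpa ▸ Set.mem_inter (show y ∈ P A (p : M) by rw [hPL]; exact hyL) hyA)
    · exact Subtype.ext (unique_pt (P A (p : M)) L hPp_line lineL hPL
        (p : M) (q : M) hPp_mem p.2 (hPP ▸ hPq_mem) q.2)
  · -- surjective
    intro b
    obtain ⟨hK_line, hK_mem, hK_par⟩ := hP A (b : M) hAaff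
    set K := P A (b : M) with hKdef
    have hKL : K ≠ L := by
      intro h
      rcases hK_par with hka | hka
      · exact hANeL (hka ▸ h)
      · obtain ⟨y, hyL, hyA⟩ := hL.2 A lineA hANeL
        exact Set.notMem_empty y (hka ▸ Set.mem_inter (h ▸ hyL) hyA)
    obtain ⟨p, hpL, hpK⟩ := hL.2 K hK_line hKL
    obtain ⟨hPp_line, hPp_mem, hPp_par⟩ := hP A p hAaff
    have hPpK : P A p = K := par_unique _ _ hPp_line hK_line hPp_par hK_par p hPp_mem hpK
    refine ⟨⟨p, hpL⟩, ?_⟩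
    have hfpK : (f ⟨p, hpL⟩ : M) ∈ K := hPpK ▸ hf ⟨p, hpL⟩
    have hKB : K ≠ B := by
      intro h
      rcases hK_par with hka | hka
      · exact hAB (hka.symm.trans h)
      · obtain ⟨y, hyA, hyB⟩ := hmeet
        exact Set.notMem_empty y (hka ▸ Set.mem_inter (h ▸ hyB) hyA)
    exact Subtype.ext (unique_pt K B hK_line lineB hKB
      (f ⟨p, hpL⟩ : M) (b : M) hfpK (f ⟨p, hpL⟩).2 hK_mem b.2)
end

section
/- Let A be an affine line of a linear space, and suppose A is finite with exactly q points. Then every point x ∉ A lies on exactly q + 1 lines: the q lines joining x to the points of A, together with the unique line through x disjoint from A. -/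
open LinearSpace

/-- If `A` is an affine line with exactly `q` points, then every point `x ∉ A` lies on
exactly `q + 1` lines. -/
theorem pencil_card_of_affine_line {M : Type*} (S : LinearSpace M)
    (A : Set M) (hA : S.IsAffine A) (q : ℕ) (hfin : A.Finite) (hcard : A.ncard = q) :
    ∀ x ∉ A, {K : Set M | K ∈ S.lines ∧ x ∈ K}.ncard = q + 1 := by
  intro x hx
  obtain ⟨hAl, hpar⟩ := hA
  obtain ⟨K₀, ⟨hK₀l, hK₀x, hK₀A⟩, hK₀u⟩ := hpar x hx
  classical
  set g : M → Set M := fun a =>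
    if h : x ≠ a then (S.join_unique x a h).choose else ∅ with hgdef
  have hg : ∀ a ∈ A, g a ∈ S.lines ∧ x ∈ g a ∧ a ∈ g a := by
    intro a ha
    have hxa : x ≠ a := fun h => hx (h ▸ ha)
    simp only [hgdef, dif_pos hxa]
    exact (S.join_unique x a hxa).choose_spec.1
  have hgu : ∀ a ∈ A, ∀ L, L ∈ S.lines → x ∈ L → a ∈ L → L = g a := by
    intro a ha L hL hxL haL
    have hxa : x ≠ a := fun h => hx (h ▸ ha)
    simp only [hgdef, dif_pos hxa]
    exact (S.join_unique x a hxa).choose_spec.2 L ⟨hL, hxL, haL⟩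
  have hinj : Set.InjOn g A := by
    intro a ha b hb hab
    by_contra hne
    have h1 := hg a ha
    have h2 := hg b hb
    have hbga : b ∈ g a := hab ▸ h2.2.2
    have : A = g a := by
      obtain ⟨L, -, hLu⟩ := S.join_unique a b hne
      rw [hLu A ⟨hAl, ha, hb⟩, hLu (g a) ⟨h1.1, h1.2.2, hbga⟩]
    exact hx (this ▸ h1.2.1)
  have hset : {K : Set M | K ∈ S.lines ∧ x ∈ K} = insert K₀ (g '' A) := by
    ext K
    constructor
    · rintro ⟨hKl, hKx⟩
      by_cases hKA : K ∩ A = ∅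
      · exact Or.inl (hK₀u K ⟨hKl, hKx, hKA⟩)
      · obtain ⟨a, haK, haA⟩ := Set.nonempty_iff_ne_empty.2 hKA
        exact Or.inr ⟨a, haA, (hgu a haA K hKl hKx haK).symm⟩
    · rintro (rfl | ⟨a, ha, rfl⟩)
      · exact ⟨hK₀l, hK₀x⟩
      · exact ⟨(hg a ha).1, (hg a ha).2.1⟩
  rw [hset]
  have hK₀notin : K₀ ∉ g '' A := by
    rintro ⟨a, ha, rfl⟩
    have : a ∈ g a ∩ A := ⟨(hg a ha).2.2, ha⟩
    rw [hK₀A] at this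
    exact this
  rw [Set.ncard_insert_of_notMem hK₀notin (hfin.image g),
    Set.ncard_image_of_injOn hinj, hcard]
end

section
/- Let (M, 𝓛) be a finite linear space in which every line is either affine or projective, and suppose there exists an affine line A with exactly q points. Then every point of M lies on exactly q + 1 lines. -/
open LinearSpace

namespace LinearSpace

variable {M : Type*} (S : LinearSpace M)

open Classical in
noncomputable def join (p a : M) : Set M :=
  if h : p ≠ a then (S.join_unique p a h).choose else ∅

lemma join_spec {p a : M} (h : p ≠ a) :
    S.join p a ∈ S.lines ∧ p ∈ S.join p a ∧ a ∈ S.join p a := by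
  rw [join, dif_pos h]
  exact (S.join_unique p a h).choose_spec.1

lemma join_eq {p a : M} (h : p ≠ a) {K : Set M} (hK : K ∈ S.lines) (hp : p ∈ K)
    (ha : a ∈ K) : K = S.join p a := by
  rw [join, dif_pos h]
  exact (S.join_unique p a h).choose_spec.2 K ⟨hK, hp, ha⟩

lemma line_eq_line {a b : M} (hab : a ≠ b) {L K : Set M} (hL : L ∈ S.lines)
    (hK : K ∈ S.lines) (haL : a ∈ L) (hbL : b ∈ L) (haK : a ∈ K) (hbK : b ∈ K) :
    L = K := by
  obtain ⟨W, _, hWu⟩ := S.join_unique a b hab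
  exact (hWu L ⟨hL, haL, hbL⟩).trans (hWu K ⟨hK, haK, hbK⟩).symm

lemma meet_count [Finite M] {p : M} {L : Set M} (hL : L ∈ S.lines) (hp : p ∉ L) :
    {K | K ∈ S.lines ∧ p ∈ K ∧ (K ∩ L).Nonempty}.ncard = L.ncard := by
  have himg : (fun a => S.join p a) '' L = {K | K ∈ S.lines ∧ p ∈ K ∧ (K ∩ L).Nonempty} := by
    ext K
    constructor
    · rintro ⟨a, haL, rfl⟩
      have hne : p ≠ a := fun h => hp (h ▸ haL)
      obtain ⟨h1, h2, h3⟩ := S.join_spec hne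
      exact ⟨h1, h2, ⟨a, h3, haL⟩⟩
    · rintro ⟨hK, hpK, a, haK, haL⟩
      have hne : p ≠ a := fun h => hp (h ▸ haL)
      exact ⟨a, haL, (S.join_eq hne hK hpK haK).symm⟩
  rw [← himg, Set.ncard_image_of_injOn]
  intro a ha b hb hab
  by_contra hne'
  have hnea : p ≠ a := fun h => hp (h ▸ ha)
  have hneb : p ≠ b := fun h => hp (h ▸ hb)
  obtain ⟨h1, h2, h3⟩ := S.join_spec hnea
  have hb3 : b ∈ S.join p a := by
    have := (S.join_spec hneb).2.2
    simpa [hab] using this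
  have : L = S.join p a := S.line_eq_line hne' hL h1 ha hb h3 hb3
  exact hp (this ▸ h2)

lemma pencil_split [Finite M] {p : M} {L : Set M} (hL : L ∈ S.lines) (hp : p ∉ L) :
    {K | K ∈ S.lines ∧ p ∈ K}.ncard
      = L.ncard + {K | K ∈ S.lines ∧ p ∈ K ∧ K ∩ L = ∅}.ncard := by
  have hsplit : {K | K ∈ S.lines ∧ p ∈ K}
      = {K | K ∈ S.lines ∧ p ∈ K ∧ (K ∩ L).Nonempty}
        ∪ {K | K ∈ S.lines ∧ p ∈ K ∧ K ∩ L = ∅} := by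
    ext K
    constructor
    · rintro ⟨h1, h2⟩
      rcases Set.eq_empty_or_nonempty (K ∩ L) with h | h
      · exact Or.inr ⟨h1, h2, h⟩
      · exact Or.inl ⟨h1, h2, h⟩
    · rintro (⟨h1, h2, _⟩ | ⟨h1, h2, _⟩) <;> exact ⟨h1, h2⟩
  have hdisj : Disjoint {K | K ∈ S.lines ∧ p ∈ K ∧ (K ∩ L).Nonempty}
      {K | K ∈ S.lines ∧ p ∈ K ∧ K ∩ L = ∅} := by
    rw [Set.disjoint_left]
    rintro K ⟨_, _, h1⟩ ⟨_, _, h2⟩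
    rw [h2] at h1
    exact Set.not_nonempty_empty h1
  rw [hsplit, Set.ncard_union_eq hdisj (Set.toFinite _) (Set.toFinite _),
    S.meet_count hL hp]

lemma pencil_affine [Finite M] {p : M} {L : Set M} (hL : S.IsAffine L) (hp : p ∉ L) :
    {K | K ∈ S.lines ∧ p ∈ K}.ncard = L.ncard + 1 := by
  rw [S.pencil_split hL.1 hp]
  congr 1
  obtain ⟨K₀, hK₀, hK₀u⟩ := hL.2 p hp
  have : {K | K ∈ S.lines ∧ p ∈ K ∧ K ∩ L = ∅} = {K₀} := by
    ext K
    constructor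
    · intro h; exact hK₀u K h
    · rintro rfl; exact hK₀
  rw [this, Set.ncard_singleton]

lemma pencil_projective [Finite M] {p : M} {L : Set M} (hL : S.IsProjective L)
    (hp : p ∉ L) : {K | K ∈ S.lines ∧ p ∈ K}.ncard = L.ncard := by
  rw [S.pencil_split hL.1 hp]
  have : {K | K ∈ S.lines ∧ p ∈ K ∧ K ∩ L = ∅} = ∅ := by
    ext K
    simp only [Set.mem_setOf_eq, Set.mem_empty_iff_false, iff_false, not_and]
    intro h1 h2 h3
    have hKL : K ≠ L := fun h => hp (h ▸ h2)
    obtain ⟨z, hz1, hz2⟩ := hL.2 K h1 hKL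
    exact Set.eq_empty_iff_forall_notMem.mp h3 z ⟨hz2, hz1⟩
  rw [this, Set.ncard_empty, Nat.add_zero]

end LinearSpace


/-- In a finite linear space in which every line is affine or projective, if there is
an affine line with exactly `q` points, then every point lies on exactly `q + 1`
lines. -/
theorem every_pencil_card_eq {M : Type*} [Finite M] (S : LinearSpace M)
    (hdich : ∀ L ∈ S.lines, S.IsAffine L ∨ S.IsProjective L)
    (A : Set M) (hA : S.IsAffine A) (q : ℕ) (hcard : A.ncard = q) :
    ∀ x : M, {K : Set M | K ∈ S.lines ∧ x ∈ K}.ncard = q + 1 := by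
  have hAline := hA.1
  have pencilA : ∀ r, r ∉ A → {K : Set M | K ∈ S.lines ∧ r ∈ K}.ncard = q + 1 := by
    intro r hr
    rw [S.pencil_affine hA hr, hcard]
  intro x
  by_cases hx : x ∈ A
  · -- pick y ∈ A, y ≠ x
    obtain ⟨a, b, c, haA, hbA, hcA, hab, hac, hbc⟩ := S.exists_three_points A hAline
    obtain ⟨y, hyA, hyx⟩ : ∃ y, y ∈ A ∧ y ≠ x := by
      by_cases h : a = x
      · exact ⟨b, hbA, fun hh => hab (h ▸ hh ▸ rfl)⟩
      · exact ⟨a, haA, h⟩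
    -- K : a line through y other than A
    obtain ⟨L₁, L₂, L₃, h1, h2, h3, hy1, hy2, hy3, h12, h13, h23⟩ := S.exists_three_lines y
    obtain ⟨K, hK, hyK, hKA⟩ : ∃ K, K ∈ S.lines ∧ y ∈ K ∧ K ≠ A := by
      by_cases hA1 : L₁ = A
      · exact ⟨L₂, h2, hy2, fun h => h12 (hA1 ▸ h ▸ rfl)⟩
      · exact ⟨L₁, h1, hy1, hA1⟩
    have hxK : x ∉ K := fun hxk =>
      hKA (S.line_eq_line hyx hK hAline hyK hxk hyA hx)
    -- L : a line through x other than A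
    obtain ⟨N₁, N₂, N₃, g1, g2, g3, hx1, hx2, hx3, g12, g13, g23⟩ := S.exists_three_lines x
    obtain ⟨L, hLmem, hxL, hLA⟩ : ∃ L, L ∈ S.lines ∧ x ∈ L ∧ L ≠ A := by
      by_cases hA1 : N₁ = A
      · exact ⟨N₂, g2, hx2, fun h => g12 (hA1 ▸ h ▸ rfl)⟩
      · exact ⟨N₁, g1, hx1, hA1⟩
    -- helper facts
    have hA2 : ∀ z ∈ L, z ∈ A → z = x := by
      intro z hzL hzA
      by_contra hzx
      exact hLA (S.line_eq_line hzx hLmem hAline hzL hxL hzA hx)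
    have hK2 : ∀ z ∈ L, ∀ w ∈ L, z ∈ K → w ∈ K → z = w := by
      intro z hzL w hwL hzK hwK
      by_contra hzw
      exact hxK ((S.line_eq_line hzw hLmem hK hzL hwL hzK hwK) ▸ hxL)
    -- find r ∈ L, r ∉ A, r ∉ K
    obtain ⟨u, v, w, hu, hv, hw, huv, huw, hvw⟩ := S.exists_three_points L hLmem
    obtain ⟨r, hrL, hrA, hrK⟩ : ∃ r, r ∈ L ∧ r ∉ A ∧ r ∉ K := by
      by_contra h
      push_neg at h
      have key : ∀ z ∈ L, z ∈ A ∨ z ∈ K := fun z hz =>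
        (Classical.em (z ∈ A)).imp id (h z hz)
      rcases key u hu with h1 | h1 <;> rcases key v hv with h2 | h2 <;>
        rcases key w hw with h3 | h3
      · exact huv ((hA2 u hu h1).trans (hA2 v hv h2).symm)
      · exact huv ((hA2 u hu h1).trans (hA2 v hv h2).symm)
      · exact huw ((hA2 u hu h1).trans (hA2 w hw h3).symm)
      · exact hvw (hK2 v hv w hw h2 h3)
      · exact hvw ((hA2 v hv h2).trans (hA2 w hw h3).symm)
      · exact huw (hK2 u hu w hw h1 h3)
      · exact huv (hK2 u hu v hv h1 h2)
      · exact huv (hK2 u hu v hv h1 h2)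
    have hr1 := pencilA r hrA
    rcases hdich K hK with hKaff | hKproj
    · have h1 := S.pencil_affine hKaff hrK
      have h2 : K.ncard = q := by omega
      rw [S.pencil_affine hKaff hxK, h2]
    · have h1 := S.pencil_projective hKproj hrK
      have h2 : K.ncard = q + 1 := by omega
      rw [S.pencil_projective hKproj hxK, h2]
  · exact pencilA x hx
end

section
/- Let (M, 𝓛) be a finite linear space in which every line is either affine or projective, and suppose there exists an affine line with exactly q points. Then every line of 𝓛 has exactly q or q + 1 points; moreover, a line is affine if and only if it has exactly q points, and projective if and only if it has exactly q + 1 points. -/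
namespace LinearSpace

variable {M : Type*}

/-- Two distinct common points force equal lines. -/
lemma eq_of_two_mem (S : LinearSpace M) {L K : Set M} (hL : L ∈ S.lines) (hK : K ∈ S.lines)
    {a b : M} (hab : a ≠ b) (haL : a ∈ L) (hbL : b ∈ L) (haK : a ∈ K) (hbK : b ∈ K) :
    L = K := by
  obtain ⟨N, -, hu⟩ := S.join_unique a b hab
  rw [hu L ⟨hL, haL, hbL⟩, hu K ⟨hK, haK, hbK⟩]

/-- Two lines never cover all points. -/
lemma exists_outside (S : LinearSpace M) {L K : Set M} (hL : L ∈ S.lines) (hK : K ∈ S.lines) :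
    ∃ p, p ∉ L ∧ p ∉ K := by
  by_contra h
  push_neg at h
  obtain ⟨a, -, -, haL, -, -, -, -, -⟩ := S.exists_three_points L hL
  obtain ⟨L₁, L₂, L₃, h1, h2, h3, p1, p2, p3, d12, d13, d23⟩ := S.exists_three_lines a
  -- pick N through a, N ≠ L, N ≠ K
  have : ∃ N, N ∈ S.lines ∧ a ∈ N ∧ N ≠ L ∧ N ≠ K := by
    by_cases e1 : L₁ ≠ L ∧ L₁ ≠ K
    · exact ⟨L₁, h1, p1, e1⟩
    by_cases e2 : L₂ ≠ L ∧ L₂ ≠ K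
    · exact ⟨L₂, h2, p2, e2⟩
    refine ⟨L₃, h3, p3, ?_, ?_⟩ <;> push_neg at e1 e2 <;> intro e3 <;>
      rcases Classical.em (L₁ = L) with h' | h' <;>
      rcases Classical.em (L₂ = L) with h'' | h'' <;>
      rcases Classical.em (L₁ = K) with g' | g' <;>
      rcases Classical.em (L₂ = K) with g'' | g'' <;>
      first
        | exact d12 (h'.trans h''.symm)
        | exact d12 (g'.trans g''.symm)
        | exact d13 (h'.trans e3.symm)
        | exact d13 (g'.trans e3.symm)
        | exact d23 (h''.trans e3.symm)
        | exact d23 (g''.trans e3.symm)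
        | (first | exact g' (e1 h') | exact h' (e2 g'') | exact g'' (e2 h'') | exact h'' (e1 g'))
  obtain ⟨N, hN, haN, hNL, hNK⟩ := this
  obtain ⟨x, y, z, hx, hy, hz, dxy, dxz, dyz⟩ := S.exists_three_points N hN
  -- two of x,y,z differ from a
  have key : ∀ w ∈ N, w ≠ a → w ∈ K := by
    intro w hw hwa
    by_cases hwL : w ∈ L
    · exact absurd (S.eq_of_two_mem hN hL hwa hw haN hwL haL) hNL
    · exact h w hwL
  obtain ⟨u, v, hu, hv, duv⟩ : ∃ u v, (u ∈ N ∧ u ≠ a) ∧ (v ∈ N ∧ v ≠ a) ∧ u ≠ v := by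
    by_cases hxa : x = a
    · exact ⟨y, z, ⟨hy, fun e => dxy (hxa.trans e.symm)⟩,
        ⟨hz, fun e => dxz (hxa.trans e.symm)⟩, dyz⟩
    by_cases hya : y = a
    · exact ⟨x, z, ⟨hx, hxa⟩, ⟨hz, fun e => dyz (hya.trans e.symm)⟩, dxz⟩
    · exact ⟨x, y, ⟨hx, hxa⟩, ⟨hy, hya⟩, dxy⟩
  exact hNK (S.eq_of_two_mem hN hK duv hu.1 hv.1 (key u hu.1 hu.2) (key v hv.1 hv.2))

/-- The lines through `p` meeting `L` are in bijection with points of `L`. -/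
lemma pencil_meet_ncard (S : LinearSpace M) {L : Set M} (hL : L ∈ S.lines)
    {p : M} (hp : p ∉ L) :
    {K | K ∈ S.lines ∧ p ∈ K ∧ (K ∩ L).Nonempty}.ncard = L.ncard := by
  classical
  set J : M → Set M := fun x => if h : p = x then ∅ else (S.join_unique p x h).choose with hJ
  have hJspec : ∀ x ∈ L, J x ∈ S.lines ∧ p ∈ J x ∧ x ∈ J x := by
    intro x hx
    have hpx : p ≠ x := fun e => hp (e ▸ hx)
    simp only [hJ, dif_neg hpx]
    exact (S.join_unique p x hpx).choose_spec.1
  have hJu : ∀ x ∈ L, ∀ K, K ∈ S.lines → p ∈ K → x ∈ K → K = J x := by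
    intro x hx K hK hpK hxK
    have hpx : p ≠ x := fun e => hp (e ▸ hx)
    simp only [hJ, dif_neg hpx]
    exact (S.join_unique p x hpx).choose_spec.2 K ⟨hK, hpK, hxK⟩
  have hinj : Set.InjOn J L := by
    intro x hx y hy hxy
    by_contra hne
    obtain ⟨h1, h2, h3⟩ := hJspec x hx
    obtain ⟨h1', h2', h3'⟩ := hJspec y hy
    have : L = J x := S.eq_of_two_mem hL h1 hne hx hy h3 (hxy ▸ h3')
    exact hp (this ▸ h2)
  have himg : J '' L = {K | K ∈ S.lines ∧ p ∈ K ∧ (K ∩ L).Nonempty} := by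
    ext K
    constructor
    · rintro ⟨x, hx, rfl⟩
      obtain ⟨h1, h2, h3⟩ := hJspec x hx
      exact ⟨h1, h2, x, h3, hx⟩
    · rintro ⟨hK, hpK, x, hxK, hxL⟩
      exact ⟨x, hxL, (hJu x hxL K hK hpK hxK).symm⟩
  rw [← himg, Set.ncard_image_of_injOn hinj]

/-- If `L` is affine and `p ∉ L`, the pencil at `p` has `|L| + 1` lines. -/
lemma pencil_ncard_of_affine [Finite M] (S : LinearSpace M) {L : Set M}
    (hL : S.IsAffine L) {p : M} (hp : p ∉ L) :
    {K | K ∈ S.lines ∧ p ∈ K}.ncard = L.ncard + 1 := by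
  obtain ⟨N, ⟨hN, hpN, hNL⟩, hNu⟩ := hL.2 p hp
  have hsplit : {K | K ∈ S.lines ∧ p ∈ K}
      = insert N {K | K ∈ S.lines ∧ p ∈ K ∧ (K ∩ L).Nonempty} := by
    ext K
    constructor
    · rintro ⟨hK, hpK⟩
      rcases Set.eq_empty_or_nonempty (K ∩ L) with he | hne
      · exact Or.inl (hNu K ⟨hK, hpK, he⟩)
      · exact Or.inr ⟨hK, hpK, hne⟩
    · rintro (rfl | ⟨hK, hpK, -⟩)
      exacts [⟨hN, hpN⟩, ⟨hK, hpK⟩]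
  have hNnot : N ∉ {K | K ∈ S.lines ∧ p ∈ K ∧ (K ∩ L).Nonempty} := by
    rintro ⟨-, -, hne⟩
    rw [hNL] at hne
    exact hne.ne_empty rfl
  rw [hsplit, Set.ncard_insert_of_notMem hNnot (Set.toFinite _),
    S.pencil_meet_ncard hL.1 hp]

/-- If `L` is projective and `p ∉ L`, the pencil at `p` has `|L|` lines. -/
lemma pencil_ncard_of_projective (S : LinearSpace M) {L : Set M}
    (hL : S.IsProjective L) {p : M} (hp : p ∉ L) :
    {K | K ∈ S.lines ∧ p ∈ K}.ncard = L.ncard := by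
  have : {K | K ∈ S.lines ∧ p ∈ K} = {K | K ∈ S.lines ∧ p ∈ K ∧ (K ∩ L).Nonempty} := by
    ext K
    constructor
    · rintro ⟨hK, hpK⟩
      have hKL : K ≠ L := fun e => hp (e ▸ hpK)
      obtain ⟨x, hx1, hx2⟩ := hL.2 K hK hKL
      exact ⟨hK, hpK, x, hx2, hx1⟩
    · rintro ⟨hK, hpK, -⟩
      exact ⟨hK, hpK⟩
  rw [this, S.pencil_meet_ncard hL.1 hp]

end LinearSpace

open LinearSpace

/-- In a finite linear space in which every line is affine or projective, if there is
an affine line with exactly `q` points, then every line has `q` or `q + 1` points;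
a line is affine iff it has `q` points and projective iff it has `q + 1` points. -/
theorem line_card_dichotomy {M : Type*} [Finite M] (S : LinearSpace M)
    (hdich : ∀ L ∈ S.lines, S.IsAffine L ∨ S.IsProjective L)
    (A : Set M) (hA : S.IsAffine A) (q : ℕ) (hcard : A.ncard = q) :
    ∀ L ∈ S.lines, (L.ncard = q ∨ L.ncard = q + 1) ∧
      (S.IsAffine L ↔ L.ncard = q) ∧ (S.IsProjective L ↔ L.ncard = q + 1) := by
  intro L hL
  obtain ⟨p, hpL, hpA⟩ := S.exists_outside hL hA.1
  have hpen : {K | K ∈ S.lines ∧ p ∈ K}.ncard = q + 1 := by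
    rw [S.pencil_ncard_of_affine hA hpA, hcard]
  have haff : S.IsAffine L → L.ncard = q := by
    intro h
    have := S.pencil_ncard_of_affine h hpL
    omega
  have hproj : S.IsProjective L → L.ncard = q + 1 := by
    intro h
    have := S.pencil_ncard_of_projective h hpL
    omega
  rcases hdich L hL with h | h
  · have hq := haff h
    refine ⟨Or.inl hq, ⟨fun _ => hq, fun _ => h⟩, ?_, ?_⟩
    · intro h'
      have := hproj h'
      omega
    · intro h'
      omega
  · have hq := hproj h
    refine ⟨Or.inr hq, ⟨?_, ?_⟩, fun _ => hq, fun _ => h⟩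
    · intro h'
      have := haff h'
      omega
    · intro h'
      omega
end

section
/- Let (M, 𝓛) be a finite linear space in which every line is either affine or projective. If there exist two distinct affine lines that intersect each other, then no line of 𝓛 is projective, i.e., every line is affine. -/
open LinearSpace

namespace LSAux

variable {M : Type*}

/-- Generic counting: disjoint union over a finset. -/
lemma ncard_biUnion [Finite M] {ι : Type*} (t : Finset ι) (f : ι → Set M)
    (h : ∀ i ∈ t, ∀ j ∈ t, i ≠ j → Disjoint (f i) (f j)) :
    (⋃ i ∈ t, f i).ncard = ∑ i ∈ t, (f i).ncard := by
  classical
  induction t using Finset.induction_on with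
  | empty => simp
  | @insert a s ha ih =>
      rw [Finset.sum_insert ha]
      have hU : (⋃ i ∈ insert a s, f i) = f a ∪ ⋃ i ∈ s, f i := by
        simp [Set.biUnion_insert]
      rw [hU, Set.ncard_union_eq, ih]
      · intro i hi j hj hij
        exact h i (Finset.mem_insert_of_mem hi) j (Finset.mem_insert_of_mem hj) hij
      · simp only [Set.disjoint_iUnion_right]
        intro i hi
        exact h a (Finset.mem_insert_self a s) i
          (Finset.mem_insert_of_mem hi) (fun hc => ha (hc ▸ hi))

variable (S : LinearSpace M)

lemma inter_subsing {L K : Set M} (hL : L ∈ S.lines) (hK : K ∈ S.lines) (hne : L ≠ K) :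
    (L ∩ K).Subsingleton := by
  intro p hp q hq
  by_contra hpq
  obtain ⟨N, _, hu⟩ := S.join_unique p q hpq
  exact hne ((hu L ⟨hL, hp.1, hq.1⟩).trans (hu K ⟨hK, hp.2, hq.2⟩).symm)

open Classical in
noncomputable def joinLine (p q : M) : Set M :=
  if h : p = q then ∅ else (S.join_unique p q h).choose

lemma joinLine_spec {p q : M} (h : p ≠ q) :
    joinLine S p q ∈ S.lines ∧ p ∈ joinLine S p q ∧ q ∈ joinLine S p q := by
  classical
  rw [joinLine]
  rw [dif_neg h]
  exact (S.join_unique p q h).choose_spec.1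

lemma joinLine_eq {p q : M} (h : p ≠ q) {K : Set M} (hK : K ∈ S.lines)
    (hp : p ∈ K) (hq : q ∈ K) : K = joinLine S p q := by
  classical
  rw [joinLine]
  rw [dif_neg h]
  exact (S.join_unique p q h).choose_spec.2 K ⟨hK, hp, hq⟩

def linesThrough (p : M) : Set (Set M) := {K | K ∈ S.lines ∧ p ∈ K}

lemma meets_card [Finite M] {L : Set M} (hL : L ∈ S.lines) {p : M} (hp : p ∉ L) :
    {K | K ∈ S.lines ∧ p ∈ K ∧ (K ∩ L).Nonempty}.ncard = L.ncard := by
  have hset : {K | K ∈ S.lines ∧ p ∈ K ∧ (K ∩ L).Nonempty} = joinLine S p '' L := by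
    ext K
    constructor
    · rintro ⟨hK, hpK, q, hqK, hqL⟩
      have hpq : p ≠ q := fun h => hp (h ▸ hqL)
      exact ⟨q, hqL, (joinLine_eq S hpq hK hpK hqK).symm⟩
    · rintro ⟨q, hqL, rfl⟩
      have hpq : p ≠ q := fun h => hp (h ▸ hqL)
      obtain ⟨h1, h2, h3⟩ := joinLine_spec S hpq
      exact ⟨h1, h2, q, h3, hqL⟩
  rw [hset]
  apply Set.ncard_image_of_injOn
  intro q₁ h₁ q₂ h₂ heq
  by_contra hne
  have hpq₁ : p ≠ q₁ := fun h => hp (h ▸ h₁)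
  have hpq₂ : p ≠ q₂ := fun h => hp (h ▸ h₂)
  obtain ⟨j1, j2, j3⟩ := joinLine_spec S hpq₁
  have hq₂mem : q₂ ∈ joinLine S p q₁ := by
    rw [heq]; exact (joinLine_spec S hpq₂).2.2
  have : L = joinLine S q₁ q₂ := joinLine_eq S hne hL h₁ h₂
  have h2' : joinLine S p q₁ = joinLine S q₁ q₂ := joinLine_eq S hne j1 j3 hq₂mem
  exact hp (by rw [this, ← h2']; exact j2)

lemma linesThrough_split {L : Set M} {p : M} :
    linesThrough S p = {K | K ∈ S.lines ∧ p ∈ K ∧ (K ∩ L).Nonempty}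
      ∪ {K | K ∈ S.lines ∧ p ∈ K ∧ K ∩ L = ∅} := by
  ext K
  simp only [linesThrough, Set.mem_setOf_eq, Set.mem_union]
  rcases (K ∩ L).eq_empty_or_nonempty with h | h
  · constructor
    · rintro ⟨h1, h2⟩; exact Or.inr ⟨h1, h2, h⟩
    · rintro (⟨h1, h2, -⟩ | ⟨h1, h2, -⟩) <;> exact ⟨h1, h2⟩
  · constructor
    · rintro ⟨h1, h2⟩; exact Or.inl ⟨h1, h2, h⟩
    · rintro (⟨h1, h2, -⟩ | ⟨h1, h2, -⟩) <;> exact ⟨h1, h2⟩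

lemma deg_proj [Finite M] {L : Set M} (hL : S.IsProjective L) {p : M} (hp : p ∉ L) :
    (linesThrough S p).ncard = L.ncard := by
  have hpar : {K | K ∈ S.lines ∧ p ∈ K ∧ K ∩ L = ∅} = ∅ := by
    ext K
    simp only [Set.mem_setOf_eq, Set.mem_empty_iff_false, iff_false, not_and]
    intro hK hpK hdisj
    have hne : K ≠ L := fun h => hp (h ▸ hpK)
    obtain ⟨q, hq⟩ := hL.2 K hK hne
    exact absurd hdisj (by simp [Set.eq_empty_iff_forall_notMem]; exact ⟨q, hq.2, hq.1⟩)
  rw [linesThrough_split S (L := L), hpar, Set.union_empty, meets_card S hL.1 hp]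

lemma deg_affine [Finite M] {L : Set M} (hL : S.IsAffine L) {p : M} (hp : p ∉ L) :
    (linesThrough S p).ncard = L.ncard + 1 := by
  obtain ⟨K₀, hK₀, hu⟩ := hL.2 p hp
  have hpar : {K | K ∈ S.lines ∧ p ∈ K ∧ K ∩ L = ∅} = {K₀} := by
    ext K
    simp only [Set.mem_setOf_eq, Set.mem_singleton_iff]
    exact ⟨fun h => hu K h, fun h => h ▸ hK₀⟩
  rw [linesThrough_split S (L := L), hpar]
  rw [Set.ncard_union_eq, meets_card S hL.1 hp, Set.ncard_singleton]
  · rw [Set.disjoint_singleton_right]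
    rintro ⟨-, -, h⟩
    rw [hK₀.2.2] at h
    exact h.ne_empty rfl

lemma exists_line_ne_ne (q : M) (L K : Set M) :
    ∃ N ∈ S.lines, q ∈ N ∧ N ≠ L ∧ N ≠ K := by
  obtain ⟨L₁, L₂, L₃, h₁, h₂, h₃, m₁, m₂, m₃, d₁₂, d₁₃, d₂₃⟩ := S.exists_three_lines q
  by_contra h
  push_neg at h
  have f : ∀ N, N ∈ S.lines → q ∈ N → N = L ∨ N = K := by
    intro N hN hq
    by_cases hNL : N = L
    · exact Or.inl hNL
    · exact Or.inr (h N hN hq hNL)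
  rcases f L₁ h₁ m₁ with e₁ | e₁ <;> rcases f L₂ h₂ m₂ with e₂ | e₂ <;>
    rcases f L₃ h₃ m₃ with e₃ | e₃ <;> simp_all

lemma exists_point_off_two {L K : Set M} (hL : L ∈ S.lines) (hK : K ∈ S.lines) :
    ∃ p, p ∉ L ∧ p ∉ K := by
  obtain ⟨a, -, -, ha, -, -, -, -, -⟩ := S.exists_three_points L hL
  obtain ⟨N, hN, haN, hNL, hNK⟩ := exists_line_ne_ne S a L K
  have hsubL : (N ∩ L).Subsingleton := inter_subsing S hN hL hNL
  have hsubK : (N ∩ K).Subsingleton := inter_subsing S hN hK hNK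
  obtain ⟨x, y, z, hxN, hyN, hzN, hxy, hxz, hyz⟩ := S.exists_three_points N hN
  by_contra hcon
  push_neg at hcon
  have hx := or_iff_not_imp_left.mpr (hcon x)
  have hy := or_iff_not_imp_left.mpr (hcon y)
  have hz := or_iff_not_imp_left.mpr (hcon z)
  rcases hx with hx | hx <;> rcases hy with hy | hy <;> rcases hz with hz | hz
  · exact hxy (hsubL ⟨hxN, hx⟩ ⟨hyN, hy⟩)
  · exact hxy (hsubL ⟨hxN, hx⟩ ⟨hyN, hy⟩)
  · exact hxz (hsubL ⟨hxN, hx⟩ ⟨hzN, hz⟩)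
  · exact hyz (hsubK ⟨hyN, hy⟩ ⟨hzN, hz⟩)
  · exact hyz (hsubL ⟨hyN, hy⟩ ⟨hzN, hz⟩)
  · exact hxz (hsubK ⟨hxN, hx⟩ ⟨hzN, hz⟩)
  · exact hxy (hsubK ⟨hxN, hx⟩ ⟨hyN, hy⟩)
  · exact hxy (hsubK ⟨hxN, hx⟩ ⟨hyN, hy⟩)

lemma not_proj_of_affine {A : Set M} (hA : S.IsAffine A) : ¬ S.IsProjective A := by
  intro hP
  obtain ⟨p, hp, -⟩ := exists_point_off_two S hA.1 hA.1
  obtain ⟨K, ⟨hK, hpK, hdisj⟩, -⟩ := hA.2 p hp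
  have hne : K ≠ A := fun h => hp (h ▸ hpK)
  obtain ⟨q, hq⟩ := hP.2 K hK hne
  have : q ∈ K ∩ A := ⟨hq.2, hq.1⟩
  rw [hdisj] at this
  exact this

lemma exists_line_notMem (x : M) : ∃ N ∈ S.lines, x ∉ N := by
  obtain ⟨L₁, -, -, h₁, -, -, m₁, -, -, -, -, -⟩ := S.exists_three_lines x
  obtain ⟨a, b, c, ha, hb, hc, hab, -, -⟩ := S.exists_three_points L₁ h₁
  obtain ⟨q, hqL, hqx⟩ : ∃ q, q ∈ L₁ ∧ q ≠ x := by
    by_cases hax : a = x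
    · exact ⟨b, hb, fun h => hab (hax ▸ h ▸ rfl)⟩
    · exact ⟨a, ha, hax⟩
  obtain ⟨N, hN, hqN, hNL, -⟩ := exists_line_ne_ne S q L₁ L₁
  refine ⟨N, hN, fun hxN => ?_⟩
  exact hqx (inter_subsing S hN h₁ hNL ⟨hqN, hqL⟩ ⟨hxN, m₁⟩)

end LSAux

/-- In a finite linear space in which every line is affine or projective, if two
distinct affine lines intersect, then no line is projective, i.e. every line is
affine. -/
theorem all_affine_of_intersecting_affine_lines {M : Type*} [Finite M]
    (S : LinearSpace M)
    (hdich : ∀ L ∈ S.lines, S.IsAffine L ∨ S.IsProjective L)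
    (A B : Set M) (hA : S.IsAffine A) (hB : S.IsAffine B) (hAB : A ≠ B)
    (hmeet : (A ∩ B).Nonempty) :
    (∀ L ∈ S.lines, ¬ S.IsProjective L) ∧ (∀ L ∈ S.lines, S.IsAffine L) := by
  classical
  have key : ∀ L ∈ S.lines, ¬ S.IsProjective L := by
    intro P hPmem hP
    set n := A.ncard with hn
    -- all affine lines have size n
    have haff : ∀ L, S.IsAffine L → L.ncard = n := by
      intro L hL
      obtain ⟨p, hpL, hpA⟩ := LSAux.exists_point_off_two S hL.1 hA.1
      have h1 := LSAux.deg_affine S hL hpL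
      have h2 := LSAux.deg_affine S hA hpA
      omega
    have hproj : ∀ Q, S.IsProjective Q → Q.ncard = n + 1 := by
      intro Q hQ
      obtain ⟨p, hpQ, hpA⟩ := LSAux.exists_point_off_two S hQ.1 hA.1
      have h1 := LSAux.deg_proj S hQ hpQ
      have h2 := LSAux.deg_affine S hA hpA
      omega
    have hdeg : ∀ p : M, (LSAux.linesThrough S p).ncard = n + 1 := by
      intro p
      obtain ⟨N, hN, hpN⟩ := LSAux.exists_line_notMem S p
      rcases hdich N hN with h | h
      · rw [LSAux.deg_affine S h hpN, haff N h]
      · rw [LSAux.deg_proj S h hpN, hproj N h]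
    have hn1 : 1 ≤ n := by
      obtain ⟨a, -, -, ha, -, -, -, -, -⟩ := S.exists_three_points A hA.1
      have : 0 < A.ncard := (Set.ncard_pos (Set.toFinite A)).mpr ⟨a, ha⟩
      omega
    -- counting at each point
    have count : ∀ x : M, Nat.card M =
        ((Set.toFinite (LSAux.linesThrough S x)).toFinset.filter
          (fun L => S.IsProjective L)).card + n * n := by
      intro x
      set Lf := (Set.toFinite (LSAux.linesThrough S x)).toFinset with hLf
      have hmem : ∀ L, L ∈ Lf ↔ L ∈ S.lines ∧ x ∈ L := by
        intro L
        simp [hLf, Set.Finite.mem_toFinset, LSAux.linesThrough]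
      have hcard : Lf.card = n + 1 := by
        rw [hLf, ← Set.ncard_eq_toFinset_card]; exact hdeg x
      have hUnion : (⋃ L ∈ Lf, (L \ {x})) = Set.univ \ {x} := by
        ext p
        simp only [Set.mem_iUnion, Set.mem_diff, Set.mem_singleton_iff, Set.mem_univ,
          true_and, exists_prop]
        constructor
        · rintro ⟨L, -, -, hpx⟩; exact hpx
        · intro hpx
          obtain ⟨hj1, hj2, hj3⟩ := LSAux.joinLine_spec S (Ne.symm hpx)
          exact ⟨_, (hmem _).mpr ⟨hj1, hj2⟩, hj3, hpx⟩
      have hdisj : ∀ L ∈ Lf, ∀ K ∈ Lf, L ≠ K → Disjoint (L \ {x}) (K \ {x}) := by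
        intro L hL K hK hne
        rw [Set.disjoint_left]
        rintro p ⟨hpL, hpx⟩ ⟨hpK, -⟩
        exact hpx (LSAux.inter_subsing S ((hmem L).mp hL).1 ((hmem K).mp hK).1 hne
          ⟨hpL, hpK⟩ ⟨((hmem L).mp hL).2, ((hmem K).mp hK).2⟩)
      have hsum1 : (Set.univ \ {x} : Set M).ncard = ∑ L ∈ Lf, (L \ {x}).ncard := by
        rw [← hUnion]; exact LSAux.ncard_biUnion Lf _ hdisj
      have hsum2 : ∑ L ∈ Lf, (L \ {x}).ncard + Lf.card = ∑ L ∈ Lf, L.ncard := by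
        rw [Finset.card_eq_sum_ones, ← Finset.sum_add_distrib]
        exact Finset.sum_congr rfl (fun L hL =>
          Set.ncard_diff_singleton_add_one ((hmem L).mp hL).2 (Set.toFinite L))
      set Pf := Lf.filter (fun L => S.IsProjective L) with hPf
      set Af := Lf.filter (fun L => ¬ S.IsProjective L) with hAf
      have hsplitcard : Pf.card + Af.card = Lf.card :=
        Finset.card_filter_add_card_filter_not _
      have hsumP : ∑ L ∈ Pf, L.ncard = Pf.card * (n + 1) := by
        rw [Finset.sum_congr rfl (fun L hL => hproj L (Finset.mem_filter.mp hL).2),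
          Finset.sum_const, smul_eq_mul]
      have hsumA : ∑ L ∈ Af, L.ncard = Af.card * n := by
        have : ∀ L ∈ Af, L.ncard = n := by
          intro L hL
          obtain ⟨hLf', hnp⟩ := Finset.mem_filter.mp hL
          exact haff L ((hdich L ((hmem L).mp hLf').1).resolve_right hnp)
        rw [Finset.sum_congr rfl this, Finset.sum_const, smul_eq_mul]
      have hsplit : ∑ L ∈ Lf, L.ncard = Pf.card * (n + 1) + Af.card * n := by
        rw [← Finset.sum_filter_add_sum_filter_not Lf (fun L => S.IsProjective L),
          ← hPf, ← hAf, hsumP, hsumA]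
      have e1 : (Set.univ \ {x} : Set M).ncard + 1 = Nat.card M := by
        rw [Set.ncard_diff_singleton_add_one (Set.mem_univ x) (Set.toFinite _),
          Set.ncard_univ]
      have harith : Pf.card * (n + 1) + Af.card * n = Pf.card + (Pf.card + Af.card) * n := by
        ring
      rw [hsplitcard, hcard] at harith
      have hx2 : (n + 1) * n = n * n + n := by ring
      linarith
    -- parallels of A give divisibility
    have hdvd : n ∣ Nat.card M := by
      set Parf := (Set.toFinite {K | K ∈ S.lines ∧ K ∩ A = ∅}).toFinset with hParf
      have hmem : ∀ K, K ∈ Parf ↔ K ∈ S.lines ∧ K ∩ A = ∅ := by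
        intro K; simp [hParf, Set.Finite.mem_toFinset]
      have hUnion : (⋃ K ∈ Parf, K) = Set.univ \ A := by
        ext p
        simp only [Set.mem_iUnion, Set.mem_diff, Set.mem_univ, true_and, exists_prop]
        constructor
        · rintro ⟨K, hK, hpK⟩
          intro hpA
          have := (hmem K).mp hK
          have : p ∈ K ∩ A := ⟨hpK, hpA⟩
          rw [((hmem K).mp hK).2] at this
          exact this
        · intro hpA
          obtain ⟨K, ⟨hK1, hK2, hK3⟩, -⟩ := hA.2 p hpA
          exact ⟨K, (hmem K).mpr ⟨hK1, hK3⟩, hK2⟩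
      have hdisj : ∀ K ∈ Parf, ∀ K' ∈ Parf, K ≠ K' → Disjoint (K : Set M) K' := by
        intro K hK K' hK' hne
        rw [Set.disjoint_left]
        intro p hpK hpK'
        have hpA : p ∉ A := by
          intro hpA
          have : p ∈ K ∩ A := ⟨hpK, hpA⟩
          rw [((hmem K).mp hK).2] at this
          exact this
        obtain ⟨K₀, -, hu⟩ := hA.2 p hpA
        exact hne ((hu K ⟨((hmem K).mp hK).1, hpK, ((hmem K).mp hK).2⟩).trans
          (hu K' ⟨((hmem K').mp hK').1, hpK', ((hmem K').mp hK').2⟩).symm)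
      have hsum1 : (Set.univ \ A : Set M).ncard = ∑ K ∈ Parf, K.ncard := by
        rw [← hUnion]; exact LSAux.ncard_biUnion Parf _ hdisj
      have hsizes : ∀ K ∈ Parf, K.ncard = n := by
        intro K hK
        obtain ⟨hK1, hK2⟩ := (hmem K).mp hK
        apply haff
        refine (hdich K hK1).resolve_right (fun hKp => ?_)
        have hKA : A ≠ K := by
          rintro rfl
          obtain ⟨a, -, -, ha, -, -, -, -, -⟩ := S.exists_three_points A hA.1
          have : a ∈ A ∩ A := ⟨ha, ha⟩
          rw [hK2] at this
          exact this
        obtain ⟨q, hq⟩ := hKp.2 A hA.1 hKA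
        have : q ∈ K ∩ A := ⟨hq.1, hq.2⟩
        rw [hK2] at this
        exact this
      have hsum2 : ∑ K ∈ Parf, K.ncard = Parf.card * n := by
        rw [Finset.sum_congr rfl hsizes, Finset.sum_const, smul_eq_mul]
      have e1 : (Set.univ \ A : Set M).ncard + A.ncard = Nat.card M := by
        rw [Set.ncard_diff_add_ncard_of_subset (Set.subset_univ A) (Set.toFinite _),
          Set.ncard_univ]
      have hAn : A.ncard = n := hn.symm
      refine ⟨Parf.card + 1, ?_⟩
      have h3 : Nat.card M = Parf.card * n + n := by linarith
      rw [h3]; ring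
    -- at the intersection point x of A and B, no projective lines pass
    obtain ⟨x, hxA, hxB⟩ := hmeet
    have countx := count x
    set Lfx := (Set.toFinite (LSAux.linesThrough S x)).toFinset with hLfx
    set Pfx := Lfx.filter (fun L => S.IsProjective L) with hPfx
    have hmemx : ∀ L, L ∈ Lfx ↔ L ∈ S.lines ∧ x ∈ L := by
      intro L; simp [hLfx, Set.Finite.mem_toFinset, LSAux.linesThrough]
    have hcardx : Lfx.card = n + 1 := by
      rw [hLfx, ← Set.ncard_eq_toFinset_card]; exact hdeg x
    have hsub : Pfx ∪ {A, B} ⊆ Lfx := by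
      intro L hL
      rcases Finset.mem_union.mp hL with h | h
      · exact Finset.mem_filter.mp h |>.1
      · rcases Finset.mem_insert.mp h with h | h
        · rw [h]; exact (hmemx A).mpr ⟨hA.1, hxA⟩
        · rw [Finset.mem_singleton.mp h]
          exact (hmemx B).mpr ⟨hB.1, hxB⟩
    have hdisjAB : Disjoint Pfx ({A, B} : Finset (Set M)) := by
      rw [Finset.disjoint_left]
      intro L hL hLAB
      have hLp := (Finset.mem_filter.mp hL).2
      rcases Finset.mem_insert.mp hLAB with h | h
      · rw [h] at hLp
        exact LSAux.not_proj_of_affine S hA hLp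
      · rw [Finset.mem_singleton.mp h] at hLp
        exact LSAux.not_proj_of_affine S hB hLp
    have hbound : Pfx.card + 2 ≤ n + 1 := by
      have h1 : (Pfx ∪ {A, B}).card = Pfx.card + 2 := by
        rw [Finset.card_union_of_disjoint hdisjAB, Finset.card_pair hAB]
      have h2 := Finset.card_le_card hsub
      omega
    have hdvdk : n ∣ Pfx.card := by
      obtain ⟨c, hc⟩ := hdvd
      have h1 : n * c = Pfx.card + n * n := by linarith
      have h2 : n * c - n * n = Pfx.card := Nat.sub_eq_of_eq_add h1
      have h3 : n ∣ n * c - n * n := Nat.dvd_sub (Dvd.intro c rfl) (Dvd.intro n rfl)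
      rwa [h2] at h3
    have hk0 : Pfx.card = 0 := Nat.eq_zero_of_dvd_of_lt hdvdk (by omega)
    obtain ⟨y, -, -, hy, -, -, -, -, -⟩ := S.exists_three_points P hPmem
    have county := count y
    have hPy : P ∈ (Set.toFinite (LSAux.linesThrough S y)).toFinset.filter
        (fun L => S.IsProjective L) := by
      refine Finset.mem_filter.mpr ⟨?_, hP⟩
      simp [Set.Finite.mem_toFinset, LSAux.linesThrough, hPmem, hy]
    have hpos : 0 < ((Set.toFinite (LSAux.linesThrough S y)).toFinset.filter
        (fun L => S.IsProjective L)).card := Finset.card_pos.mpr ⟨P, hPy⟩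
    linarith
  refine ⟨key, fun L hL => (hdich L hL).resolve_right (key L hL)⟩
end
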